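/- Suppose $\frac{1}{2} < \alpha < 1$. Then there exist positive constants $c_1$ and $c_2$ and a function $u : [0,1] \to \mathbb{R}^2$ such that $c_1|s-t|^\alpha \leq |u(s)-u(t)| \leq c_2|s-t|^\alpha$ for all $s, t \in [0,1]$. -/

import Mathlib

open Complex Filter NNReal Set

noncomputable section

namespace BiHolderAux

def aa (y : ℝ) : ℂ := (1/2 : ℝ) + y * Complex.I

@[simp] lemma aa_re (y : ℝ) : (aa y).re = 1/2 := by simp [aa]
@[simp] lemma aa_im (y : ℝ) : (aa y).im = y := by simp [aa]

def F0 (y : ℝ) (z : ℂ) : ℂ := aa y * (starRingEnd ℂ) z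
def F1 (y : ℝ) (z : ℂ) : ℂ := aa y + (starRingEnd ℂ) (aa y * z)

lemma F0_re (y : ℝ) (z : ℂ) : (F0 y z).re = z.re/2 + y * z.im := by
  simp [F0, Complex.mul_re]; ring
lemma F0_im (y : ℝ) (z : ℂ) : (F0 y z).im = y * z.re - z.im/2 := by
  simp [F0, Complex.mul_im]; ring
lemma F1_re (y : ℝ) (z : ℂ) : (F1 y z).re = 1/2 + z.re/2 - y * z.im := by
  simp [F1, Complex.mul_re]; ring
lemma F1_im (y : ℝ) (z : ℂ) : (F1 y z).im = y - y * z.re - z.im/2 := by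
  simp [F1, Complex.mul_im]; ring

@[simp] lemma F0_zero (y : ℝ) : F0 y 0 = 0 := by simp [F0]
@[simp] lemma F0_one (y : ℝ) : F0 y 1 = aa y := by simp [F0]
@[simp] lemma F1_zero (y : ℝ) : F1 y 0 = aa y := by simp [F1]
@[simp] lemma F1_one (y : ℝ) : F1 y 1 = 1 := by
  apply Complex.ext <;> simp [F1_re, F1_im] <;> ring

lemma F0_sub (y : ℝ) (z w : ℂ) : F0 y z - F0 y w = aa y * (starRingEnd ℂ) (z - w) := by
  simp [F0, map_sub, mul_sub]
lemma norm_F0_sub (y : ℝ) (z w : ℂ) : ‖F0 y z - F0 y w‖ = ‖aa y‖ * ‖z - w‖ := by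
  rw [F0_sub, norm_mul, RCLike.norm_conj]
lemma F1_sub (y : ℝ) (z w : ℂ) : F1 y z - F1 y w = (starRingEnd ℂ) (aa y * (z - w)) := by
  simp [F1, map_sub, mul_sub]
lemma norm_F1_sub (y : ℝ) (z w : ℂ) : ‖F1 y z - F1 y w‖ = ‖aa y‖ * ‖z - w‖ := by
  rw [F1_sub, RCLike.norm_conj, norm_mul]

lemma normsq (z : ℂ) : ‖z‖^2 = z.re^2 + z.im^2 := by
  rw [Complex.sq_norm, Complex.normSq_apply]; ring

lemma norm_aa_sq (y : ℝ) : ‖aa y‖^2 = 1/4 + y^2 := by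
  rw [normsq]; simp; ring

lemma norm_aa_le_one {y : ℝ} (hy1 : y^2 < 1/4) : ‖aa y‖ ≤ 1 := by
  nlinarith [norm_aa_sq y, norm_nonneg (aa y)]

lemma norm_aa_lt_one {y : ℝ} (hy1 : y^2 < 1/4) : ‖aa y‖ < 1 := by
  nlinarith [norm_aa_sq y, norm_nonneg (aa y)]

/-! ### The invariant triangle -/

def InT (y : ℝ) (z : ℂ) : Prop :=
  0 ≤ z.im ∧ z.im ≤ 2*y*z.re ∧ z.im ≤ 2*y*(1 - z.re)

lemma InT.re_nonneg {y : ℝ} (hy0 : 0 < y) {z : ℂ} (h : InT y z) : 0 ≤ z.re := by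
  obtain ⟨h1, h2, h3⟩ := h; nlinarith
lemma InT.re_le_one {y : ℝ} (hy0 : 0 < y) {z : ℂ} (h : InT y z) : z.re ≤ 1 := by
  obtain ⟨h1, h2, h3⟩ := h; nlinarith

lemma InT_F0 {y : ℝ} (hy0 : 0 < y) (hy1 : y^2 < 1/4) {z : ℂ} (h : InT y z) :
    InT y (F0 y z) := by
  have hx0 := h.re_nonneg hy0
  have hx1 := h.re_le_one hy0
  obtain ⟨h1, h2, h3⟩ := h
  refine ⟨?_, ?_, ?_⟩ <;> simp only [F0_re, F0_im] <;> nlinarith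

lemma InT_F1 {y : ℝ} (hy0 : 0 < y) (hy1 : y^2 < 1/4) {z : ℂ} (h : InT y z) :
    InT y (F1 y z) := by
  have hx0 := h.re_nonneg hy0
  have hx1 := h.re_le_one hy0
  obtain ⟨h1, h2, h3⟩ := h
  refine ⟨?_, ?_, ?_⟩ <;> simp only [F1_re, F1_im] <;> nlinarith

lemma InT_ofReal {y : ℝ} (hy0 : 0 < y) {t : ℝ} (ht : t ∈ Icc (0:ℝ) 1) :
    InT y (t : ℂ) := by
  refine ⟨by simp, by simp; nlinarith [ht.1], by simp; nlinarith [ht.2]⟩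

lemma re_F0_le {y : ℝ} (hy0 : 0 < y) (hy1 : y^2 < 1/4) {z : ℂ} (h : InT y z) :
    (F0 y z).re ≤ 1/2 := by
  have hx1 := h.re_le_one hy0
  obtain ⟨h1, h2, h3⟩ := h
  rw [F0_re]; nlinarith

lemma re_F1_ge {y : ℝ} (hy0 : 0 < y) (hy1 : y^2 < 1/4) {z : ℂ} (h : InT y z) :
    1/2 ≤ (F1 y z).re := by
  have hx0 := h.re_nonneg hy0
  obtain ⟨h1, h2, h3⟩ := h
  rw [F1_re]; nlinarith

lemma le_of_sq_le_sq {A B : ℝ} (hA : 0 ≤ A) (hB : 0 ≤ B) (h : A^2 ≤ B^2) : A ≤ B := by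
  nlinarith

/-- Cone separation, left piece. -/
lemma cone0 {y : ℝ} (hy0 : 0 < y) (hy1 : y^2 < 1/4) {z : ℂ} (h : InT y z) :
    (1/2 - 2*y^2) * ‖F0 y z - aa y‖ ≤ 1/2 - (F0 y z).re := by
  have hx0 := h.re_nonneg hy0
  have hx1 := h.re_le_one hy0
  obtain ⟨h1, h2, h3⟩ := h
  have hkey : F0 y z - aa y = aa y * (starRingEnd ℂ) (z - 1) := by
    rw [← F0_sub, F0_one]
  have hnorm : ‖F0 y z - aa y‖ ≤ 1 - z.re := by
    rw [hkey, norm_mul, RCLike.norm_conj]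
    apply le_of_sq_le_sq (by positivity) (by nlinarith)
    rw [mul_pow, norm_aa_sq, normsq]
    simp only [Complex.sub_re, Complex.sub_im, Complex.one_re, Complex.one_im]
    nlinarith [sq_nonneg z.im, sq_nonneg (1 - z.re)]
  have hre : (F0 y z).re ≤ 1/2 - (1/2 - 2*y^2) * (1 - z.re) := by
    rw [F0_re]; nlinarith
  nlinarith [norm_nonneg (F0 y z - aa y)]

/-- Cone separation, right piece. -/
lemma cone1 {y : ℝ} (hy0 : 0 < y) (hy1 : y^2 < 1/4) {z : ℂ} (h : InT y z) :
    (1/2 - 2*y^2) * ‖F1 y z - aa y‖ ≤ (F1 y z).re - 1/2 := by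
  have hx0 := h.re_nonneg hy0
  have hx1 := h.re_le_one hy0
  obtain ⟨h1, h2, h3⟩ := h
  have hkey : F1 y z - aa y = (starRingEnd ℂ) (aa y * (z - 0)) := by
    rw [← F1_sub, F1_zero]
  have hnorm : ‖F1 y z - aa y‖ ≤ z.re := by
    rw [hkey, RCLike.norm_conj, norm_mul]
    apply le_of_sq_le_sq (by positivity) hx0
    rw [mul_pow, norm_aa_sq, normsq]
    simp only [Complex.sub_re, Complex.sub_im, Complex.zero_re, Complex.zero_im]
    nlinarith [sq_nonneg z.im, sq_nonneg z.re]
  have hre : 1/2 + (1/2 - 2*y^2) * z.re ≤ (F1 y z).re := by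
    rw [F1_re]; nlinarith
  nlinarith [norm_nonneg (F1 y z - aa y)]


lemma F0_def (y : ℝ) (z : ℂ) : F0 y z = aa y * (starRingEnd ℂ) z := rfl
lemma F1_def (y : ℝ) (z : ℂ) : F1 y z = aa y + (starRingEnd ℂ) (aa y * z) := rfl
lemma InT_def (y : ℝ) (z : ℂ) :
    InT y z ↔ 0 ≤ z.im ∧ z.im ≤ 2*y*z.re ∧ z.im ≤ 2*y*(1 - z.re) := Iff.rfl

/-! ### The approximating maps -/

def w (y : ℝ) : ℕ → ℝ → ℂ
  | 0, t => (t : ℂ)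
  | n+1, t => if t ≤ 1/2 then F0 y (w y n (2*t)) else F1 y (w y n (2*t - 1))

lemma w_succ (y : ℝ) (n : ℕ) (t : ℝ) :
    w y (n+1) t = if t ≤ 1/2 then F0 y (w y n (2*t)) else F1 y (w y n (2*t - 1)) := rfl

lemma w_zero (y : ℝ) : ∀ n, w y n 0 = 0 := by
  intro n; induction n with
  | zero => simp [w]
  | succ n ih =>
    rw [w_succ, if_pos (by norm_num)]
    norm_num [ih, F0_zero]

lemma w_one (y : ℝ) : ∀ n, w y n 1 = 1 := by
  intro n; induction n with
  | zero => simp [w]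
  | succ n ih =>
    rw [w_succ, if_neg (by norm_num)]
    norm_num [ih, F1_one]

lemma w_mem {y : ℝ} (hy0 : 0 < y) (hy1 : y^2 < 1/4) :
    ∀ n, ∀ t ∈ Icc (0:ℝ) 1, InT y (w y n t) := by
  intro n
  induction n with
  | zero => intro t ht; exact InT_ofReal hy0 ht
  | succ n ih =>
    intro t ht
    rw [w_succ]
    by_cases h : t ≤ 1/2
    · rw [if_pos h]
      exact InT_F0 hy0 hy1 (ih _ ⟨by nlinarith [ht.1], by nlinarith⟩)
    · rw [if_neg h]
      push_neg at h
      exact InT_F1 hy0 hy1 (ih _ ⟨by nlinarith, by nlinarith [ht.2]⟩)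

lemma norm_ofReal' (x : ℝ) : ‖(x : ℂ)‖ = |x| := by
  rw [Complex.norm_real, Real.norm_eq_abs]

lemma norm_F0' (y : ℝ) (z : ℂ) : ‖F0 y z‖ = ‖aa y‖ * ‖z‖ := by
  simpa [F0_zero] using norm_F0_sub y z 0

lemma norm_F1_le (y : ℝ) (z : ℂ) : ‖F1 y z‖ ≤ ‖aa y‖ + ‖aa y‖ * ‖z‖ := by
  calc ‖F1 y z‖ ≤ ‖F1 y z - F1 y 0‖ + ‖F1 y 0‖ := by
        simpa using norm_sub_le_norm_sub_add_norm_sub (F1 y z) (F1 y 0) 0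
    _ = ‖aa y‖ + ‖aa y‖ * ‖z‖ := by
        rw [norm_F1_sub, F1_zero, sub_zero]; ring

lemma w_dist {y : ℝ} (hy1 : y^2 < 1/4) :
    ∀ n, ∀ t ∈ Icc (0:ℝ) 1, ‖w y (n+1) t - w y n t‖ ≤ 3 * ‖aa y‖ ^ n := by
  intro n
  induction n with
  | zero =>
    intro t ht
    have haa1 := norm_aa_le_one hy1
    have haa0 := norm_nonneg (aa y)
    have h0 : ‖w y 0 t‖ ≤ 1 := by
      simp only [w, norm_ofReal']
      rw [_root_.abs_of_nonneg ht.1]; exact ht.2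
    have h1 : ‖w y 1 t‖ ≤ 2 := by
      rw [w_succ]
      by_cases h : t ≤ 1/2
      · rw [if_pos h, norm_F0']
        have : ‖w y 0 (2*t)‖ ≤ 1 := by
          simp only [w, norm_ofReal']
          rw [_root_.abs_of_nonneg (by nlinarith [ht.1])]; nlinarith
        nlinarith
      · rw [if_neg h]
        push_neg at h
        have : ‖w y 0 (2*t-1)‖ ≤ 1 := by
          simp only [w, norm_ofReal']
          rw [_root_.abs_of_nonneg (by nlinarith)]; nlinarith [ht.2]
        calc ‖F1 y (w y 0 (2*t-1))‖ ≤ ‖aa y‖ + ‖aa y‖ * ‖w y 0 (2*t-1)‖ := norm_F1_le ..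
          _ ≤ 2 := by nlinarith
    calc ‖w y (0+1) t - w y 0 t‖ ≤ ‖w y 1 t‖ + ‖w y 0 t‖ := norm_sub_le _ _
      _ ≤ 3 * ‖aa y‖ ^ 0 := by rw [pow_zero]; linarith
  | succ n ih =>
    intro t ht
    have haa0 := norm_nonneg (aa y)
    by_cases h : t ≤ 1/2
    · have e1 : w y (n+1+1) t = F0 y (w y (n+1) (2*t)) := by rw [w_succ, if_pos h]
      have e2 : w y (n+1) t = F0 y (w y n (2*t)) := by rw [w_succ, if_pos h]
      rw [e1, e2, norm_F0_sub]
      have hI := ih (2*t) ⟨by nlinarith [ht.1], by nlinarith⟩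
      calc ‖aa y‖ * ‖w y (n+1) (2*t) - w y n (2*t)‖ ≤ ‖aa y‖ * (3 * ‖aa y‖ ^ n) :=
            mul_le_mul_of_nonneg_left hI haa0
        _ = 3 * ‖aa y‖ ^ (n+1) := by ring
    · have e1 : w y (n+1+1) t = F1 y (w y (n+1) (2*t-1)) := by rw [w_succ, if_neg h]
      have e2 : w y (n+1) t = F1 y (w y n (2*t-1)) := by rw [w_succ, if_neg h]
      push_neg at h
      rw [e1, e2, norm_F1_sub]
      have hI := ih (2*t-1) ⟨by nlinarith, by nlinarith [ht.2]⟩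
      calc ‖aa y‖ * ‖w y (n+1) (2*t-1) - w y n (2*t-1)‖ ≤ ‖aa y‖ * (3 * ‖aa y‖ ^ n) :=
            mul_le_mul_of_nonneg_left hI haa0
        _ = 3 * ‖aa y‖ ^ (n+1) := by ring

lemma w_cauchy {y : ℝ} (hy1 : y^2 < 1/4) {t : ℝ} (ht : t ∈ Icc (0:ℝ) 1) :
    CauchySeq (fun n => w y n t) := by
  apply cauchySeq_of_le_geometric (‖aa y‖) 3 (norm_aa_lt_one hy1)
  intro n
  rw [dist_eq_norm, norm_sub_rev]
  exact w_dist hy1 n t ht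

/-! ### The limit curve -/

def uC (y : ℝ) (t : ℝ) : ℂ := limUnder atTop fun n => w y n t

lemma tendsto_uC {y : ℝ} (hy1 : y^2 < 1/4) {t : ℝ} (ht : t ∈ Icc (0:ℝ) 1) :
    Tendsto (fun n => w y n t) atTop (nhds (uC y t)) :=
  (w_cauchy hy1 ht).tendsto_limUnder

lemma uC_zero {y : ℝ} (hy1 : y^2 < 1/4) : uC y 0 = 0 := by
  have h1 := tendsto_uC hy1 (show (0:ℝ) ∈ Icc (0:ℝ) 1 by norm_num)
  have h2 : Tendsto (fun n => w y n 0) atTop (nhds 0) := by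
    simp only [w_zero]; exact tendsto_const_nhds
  exact tendsto_nhds_unique h1 h2

lemma uC_one {y : ℝ} (hy1 : y^2 < 1/4) : uC y 1 = 1 := by
  have h1 := tendsto_uC hy1 (show (1:ℝ) ∈ Icc (0:ℝ) 1 by norm_num)
  have h2 : Tendsto (fun n => w y n 1) atTop (nhds 1) := by
    simp only [w_one]; exact tendsto_const_nhds
  exact tendsto_nhds_unique h1 h2


lemma continuous_F0 (y : ℝ) : Continuous (F0 y) := by
  have h : F0 y = fun z => aa y * (starRingEnd ℂ) z := funext (F0_def y)
  rw [h]
  exact continuous_const.mul (by exact Complex.continuous_conj)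

lemma continuous_F1 (y : ℝ) : Continuous (F1 y) := by
  have h : F1 y = fun z => aa y + (starRingEnd ℂ) (aa y * z) := funext (F1_def y)
  rw [h]
  exact continuous_const.add (Complex.continuous_conj.comp (continuous_const.mul continuous_id))

lemma funEq0 {y : ℝ} (hy1 : y^2 < 1/4) {t : ℝ} (ht : t ∈ Icc (0:ℝ) 1) (h2 : t ≤ 1/2) :
    uC y t = F0 y (uC y (2*t)) := by
  have h2t : 2*t ∈ Icc (0:ℝ) 1 := ⟨by nlinarith [ht.1], by nlinarith⟩
  have hA : Tendsto (fun n => w y (n+1) t) atTop (nhds (uC y t)) :=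
    (tendsto_uC hy1 ht).comp (tendsto_add_atTop_nat 1)
  have hB : Tendsto (fun n => F0 y (w y n (2*t))) atTop (nhds (F0 y (uC y (2*t)))) :=
    ((continuous_F0 y).tendsto _).comp (tendsto_uC hy1 h2t)
  have heq : (fun n => w y (n+1) t) = fun n => F0 y (w y n (2*t)) := by
    funext n; rw [w_succ, if_pos h2]
  rw [heq] at hA
  exact tendsto_nhds_unique hA hB

lemma uC_half {y : ℝ} (hy1 : y^2 < 1/4) : uC y (1/2) = aa y := by
  have h : uC y (1/2) = F0 y (uC y (2*(1/2))) := funEq0 hy1 (by norm_num) (by norm_num)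
  rw [h]
  norm_num
  have : uC y 1 = 1 := by
    have h1 := tendsto_uC hy1 (show (1:ℝ) ∈ Icc (0:ℝ) 1 by norm_num)
    have h2 : Tendsto (fun n => w y n 1) atTop (nhds 1) := by
      simp only [w_one]; exact tendsto_const_nhds
    exact tendsto_nhds_unique h1 h2
  rw [this, F0_one]

lemma funEq1 {y : ℝ} (hy1 : y^2 < 1/4) {t : ℝ} (ht : t ∈ Icc (0:ℝ) 1) (h2 : 1/2 ≤ t) :
    uC y t = F1 y (uC y (2*t - 1)) := by
  rcases eq_or_lt_of_le h2 with heq | hlt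
  · rw [← heq]
    norm_num
    rw [uC_half hy1, uC_zero hy1, F1_zero]
  · have h2t : 2*t - 1 ∈ Icc (0:ℝ) 1 := ⟨by nlinarith, by nlinarith [ht.2]⟩
    have hA : Tendsto (fun n => w y (n+1) t) atTop (nhds (uC y t)) :=
      (tendsto_uC hy1 ht).comp (tendsto_add_atTop_nat 1)
    have hB : Tendsto (fun n => F1 y (w y n (2*t - 1))) atTop (nhds (F1 y (uC y (2*t - 1)))) :=
      ((continuous_F1 y).tendsto _).comp (tendsto_uC hy1 h2t)
    have heq : (fun n => w y (n+1) t) = fun n => F1 y (w y n (2*t - 1)) := by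
      funext n; rw [w_succ, if_neg (not_le.mpr hlt)]
    rw [heq] at hA
    exact tendsto_nhds_unique hA hB

lemma uC_mem {y : ℝ} (hy0 : 0 < y) (hy1 : y^2 < 1/4) {t : ℝ} (ht : t ∈ Icc (0:ℝ) 1) :
    InT y (uC y t) := by
  have hu := tendsto_uC hy1 ht
  have hre : Tendsto (fun n => (w y n t).re) atTop (nhds ((uC y t).re)) :=
    (Complex.continuous_re.tendsto _).comp hu
  have him : Tendsto (fun n => (w y n t).im) atTop (nhds ((uC y t).im)) :=
    (Complex.continuous_im.tendsto _).comp hu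
  rw [InT_def]
  refine ⟨?_, ?_, ?_⟩
  · exact le_of_tendsto_of_tendsto' tendsto_const_nhds him
      (fun n => ((InT_def y _).mp (w_mem hy0 hy1 n t ht)).1)
  · exact le_of_tendsto_of_tendsto' him (((continuous_const.mul Complex.continuous_re).tendsto _).comp hu)
      (fun n => ((InT_def y _).mp (w_mem hy0 hy1 n t ht)).2.1)
  · exact le_of_tendsto_of_tendsto' him
      (((continuous_const.mul (continuous_const.sub Complex.continuous_re)).tendsto _).comp hu)
      (fun n => ((InT_def y _).mp (w_mem hy0 hy1 n t ht)).2.2)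


/-! ### rpow helpers -/

lemma key {y α : ℝ} (hρ : ‖aa y‖ = (2:ℝ)^(-α)) {x : ℝ} (hx : 0 ≤ x) :
    ‖aa y‖ * (2*x)^α = x^α := by
  rw [hρ, Real.mul_rpow (by norm_num) hx, ← mul_assoc, ← Real.rpow_add (by norm_num : (0:ℝ) < 2)]
  norm_num

lemma rpow_subadd {x z p : ℝ} (hx : 0 ≤ x) (hz : 0 ≤ z) (h0 : 0 ≤ p) (h1 : p ≤ 1) :
    (x + z) ^ p ≤ x ^ p + z ^ p := by
  have h := NNReal.rpow_add_le_add_rpow x.toNNReal z.toNNReal h0 h1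
  have h2 : ((x.toNNReal + z.toNNReal : ℝ≥0) : ℝ) = x + z := by
    simp [Real.coe_toNNReal, hx, hz]
  calc (x+z)^p = (((x.toNNReal + z.toNNReal : ℝ≥0) : ℝ))^p := by rw [h2]
    _ = (((x.toNNReal + z.toNNReal : ℝ≥0) ^ p : ℝ≥0) : ℝ) := by rw [NNReal.coe_rpow]
    _ ≤ (((x.toNNReal ^ p + z.toNNReal ^ p : ℝ≥0)) : ℝ) := by exact_mod_cast h
    _ = x ^ p + z ^ p := by push_cast [NNReal.coe_rpow, Real.coe_toNNReal, hx, hz]; rfl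

lemma re_le_norm (z : ℂ) : z.re ≤ ‖z‖ := by
  exact Complex.re_le_norm z

/-! ### Lower bound at the endpoints -/

lemma E0 {y α : ℝ} (hy0 : 0 < y) (hy1 : y^2 < 1/4) (hα0 : 0 < α) (hα1 : α ≤ 1)
    (hρ : ‖aa y‖ = (2:ℝ)^(-α)) :
    ∀ n : ℕ, ∀ s ∈ Icc (0:ℝ) 1, (1/2:ℝ)^n ≤ s → (1/2) * s^α ≤ ‖uC y s‖ := by
  intro n
  induction n with
  | zero =>
    intro s hs h
    norm_num at h
    have hs1 : s = 1 := le_antisymm hs.2 h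
    subst hs1
    rw [uC_one hy1, Real.one_rpow]
    norm_num
  | succ n ih =>
    intro s hs h
    by_cases hhalf : s ≤ 1/2
    · have h2s : 2*s ∈ Icc (0:ℝ) 1 := ⟨by nlinarith [hs.1], by nlinarith⟩
      have hrec : uC y s = F0 y (uC y (2*s)) := funEq0 hy1 hs hhalf
      have hnorm : ‖uC y s‖ = ‖aa y‖ * ‖uC y (2*s)‖ := by
        rw [hrec]
        calc ‖F0 y (uC y (2*s))‖ = ‖F0 y (uC y (2*s)) - F0 y 0‖ := by rw [F0_zero, sub_zero]
          _ = ‖aa y‖ * ‖uC y (2*s) - 0‖ := norm_F0_sub ..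
          _ = ‖aa y‖ * ‖uC y (2*s)‖ := by rw [sub_zero]
      have hIH : (1/2) * (2*s)^α ≤ ‖uC y (2*s)‖ := by
        apply ih _ h2s
        calc (1/2:ℝ)^n = 2 * (1/2)^(n+1) := by ring
          _ ≤ 2 * s := by linarith
      have haa : (0:ℝ) < ‖aa y‖ := by
        rw [hρ]; positivity
      calc (1/2) * s^α = ‖aa y‖ * ((1/2) * (2*s)^α) := by
            rw [show ‖aa y‖ * ((1/2) * (2*s)^α) = (1/2) * (‖aa y‖ * (2*s)^α) by ring,
              key hρ hs.1]
        _ ≤ ‖aa y‖ * ‖uC y (2*s)‖ := mul_le_mul_of_nonneg_left hIH haa.le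
        _ = ‖uC y s‖ := hnorm.symm
    · push_neg at hhalf
      have hrec : uC y s = F1 y (uC y (2*s - 1)) := funEq1 hy1 hs hhalf.le
      have hre : 1/2 ≤ (uC y s).re := by
        rw [hrec]
        exact re_F1_ge hy0 hy1 (uC_mem hy0 hy1 ⟨by nlinarith, by nlinarith [hs.2]⟩)
      have hsα : s^α ≤ 1 := Real.rpow_le_one hs.1 hs.2 hα0.le
      calc (1/2) * s^α ≤ 1/2 := by nlinarith
        _ ≤ (uC y s).re := hre
        _ ≤ ‖uC y s‖ := re_le_norm _

lemma E1 {y α : ℝ} (hy0 : 0 < y) (hy1 : y^2 < 1/4) (hα0 : 0 < α) (hα1 : α ≤ 1)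
    (hρ : ‖aa y‖ = (2:ℝ)^(-α)) :
    ∀ n : ℕ, ∀ s ∈ Icc (0:ℝ) 1, (1/2:ℝ)^n ≤ 1 - s → (1/2) * (1-s)^α ≤ ‖uC y s - 1‖ := by
  intro n
  induction n with
  | zero =>
    intro s hs h
    norm_num at h
    have hs0 : s = 0 := le_antisymm (by linarith) hs.1
    subst hs0
    rw [uC_zero hy1]
    norm_num
  | succ n ih =>
    intro s hs h
    by_cases hhalf : 1/2 ≤ s
    · have h2s : 2*s - 1 ∈ Icc (0:ℝ) 1 := ⟨by nlinarith, by nlinarith [hs.2]⟩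
      have hrec : uC y s = F1 y (uC y (2*s - 1)) := funEq1 hy1 hs hhalf
      have hnorm : ‖uC y s - 1‖ = ‖aa y‖ * ‖uC y (2*s - 1) - 1‖ := by
        rw [hrec]
        calc ‖F1 y (uC y (2*s-1)) - 1‖ = ‖F1 y (uC y (2*s-1)) - F1 y 1‖ := by rw [F1_one]
          _ = ‖aa y‖ * ‖uC y (2*s-1) - 1‖ := norm_F1_sub ..
      have hIH : (1/2) * (1 - (2*s-1))^α ≤ ‖uC y (2*s-1) - 1‖ := by
        apply ih _ h2s
        calc (1/2:ℝ)^n = 2 * (1/2)^(n+1) := by ring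
          _ ≤ 2 * (1 - s) := by linarith
          _ = 1 - (2*s - 1) := by ring
      have haa : (0:ℝ) < ‖aa y‖ := by rw [hρ]; positivity
      have hkey : ‖aa y‖ * (1 - (2*s-1))^α = (1-s)^α := by
        rw [show (1 - (2*s-1)) = 2*(1-s) by ring]
        exact key hρ (by linarith [hs.2])
      calc (1/2) * (1-s)^α = ‖aa y‖ * ((1/2) * (1 - (2*s-1))^α) := by
            rw [show ‖aa y‖ * ((1/2) * (1 - (2*s-1))^α) = (1/2) * (‖aa y‖ * (1 - (2*s-1))^α) by ring,
              hkey]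
        _ ≤ ‖aa y‖ * ‖uC y (2*s-1) - 1‖ := mul_le_mul_of_nonneg_left hIH haa.le
        _ = ‖uC y s - 1‖ := hnorm.symm
    · push_neg at hhalf
      have hrec : uC y s = F0 y (uC y (2*s)) := funEq0 hy1 hs hhalf.le
      have hre : (uC y s).re ≤ 1/2 := by
        rw [hrec]
        exact re_F0_le hy0 hy1 (uC_mem hy0 hy1 ⟨by nlinarith [hs.1], by nlinarith⟩)
      have hsα : (1-s)^α ≤ 1 := Real.rpow_le_one (by linarith [hs.1]) (by linarith [hs.1]) hα0.le
      calc (1/2) * (1-s)^α ≤ 1/2 := by nlinarith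
        _ ≤ (1 - uC y s).re := by simp; linarith
        _ ≤ ‖1 - uC y s‖ := re_le_norm _
        _ = ‖uC y s - 1‖ := norm_sub_rev _ _

lemma E0' {y α : ℝ} (hy0 : 0 < y) (hy1 : y^2 < 1/4) (hα0 : 0 < α) (hα1 : α ≤ 1)
    (hρ : ‖aa y‖ = (2:ℝ)^(-α)) {s : ℝ} (hs : s ∈ Icc (0:ℝ) 1) :
    (1/2) * s^α ≤ ‖uC y s‖ := by
  rcases eq_or_lt_of_le hs.1 with h0 | h0
  · rw [← h0, Real.zero_rpow hα0.ne']
    simp [norm_nonneg]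
  · obtain ⟨n, hn⟩ := exists_pow_lt_of_lt_one h0 (show (1/2:ℝ) < 1 by norm_num)
    exact E0 hy0 hy1 hα0 hα1 hρ n s hs hn.le

lemma E1' {y α : ℝ} (hy0 : 0 < y) (hy1 : y^2 < 1/4) (hα0 : 0 < α) (hα1 : α ≤ 1)
    (hρ : ‖aa y‖ = (2:ℝ)^(-α)) {s : ℝ} (hs : s ∈ Icc (0:ℝ) 1) :
    (1/2) * (1-s)^α ≤ ‖uC y s - 1‖ := by
  rcases eq_or_lt_of_le hs.2 with h0 | h0
  · rw [h0]
    norm_num [Real.zero_rpow hα0.ne']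
  · obtain ⟨n, hn⟩ := exists_pow_lt_of_lt_one (show (0:ℝ) < 1 - s by linarith)
      (show (1/2:ℝ) < 1 by norm_num)
    exact E1 hy0 hy1 hα0 hα1 hρ n s hs hn.le


/-! ### The main lower bound -/

lemma G {y α : ℝ} (hy0 : 0 < y) (hy1 : y^2 < 1/4) (hα0 : 0 < α) (hα1 : α ≤ 1)
    (hρ : ‖aa y‖ = (2:ℝ)^(-α)) :
    ∀ n : ℕ, ∀ s t : ℝ, s ∈ Icc (0:ℝ) 1 → t ∈ Icc (0:ℝ) 1 → s ≤ t →
      (1/2:ℝ)^n ≤ t - s →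
      ((1/2 - 2*y^2) * (1/2)) * (t-s)^α ≤ ‖uC y t - uC y s‖ := by
  intro n
  induction n with
  | zero =>
    intro s t hs ht hst h
    norm_num at h
    have hs0 : s = 0 := le_antisymm (by linarith [ht.2]) hs.1
    have ht1 : t = 1 := le_antisymm ht.2 (by linarith [hs.1])
    subst hs0; subst ht1
    rw [uC_zero hy1, uC_one hy1]
    norm_num
    nlinarith [sq_nonneg y]
  | succ n ih =>
    intro s t hs ht hst h
    have haa : (0:ℝ) < ‖aa y‖ := by rw [hρ]; positivity
    by_cases hthalf : t ≤ 1/2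
    · -- both in the left half
      have hs2 : 2*s ∈ Icc (0:ℝ) 1 := ⟨by nlinarith [hs.1], by nlinarith⟩
      have ht2 : 2*t ∈ Icc (0:ℝ) 1 := ⟨by nlinarith [ht.1], by nlinarith⟩
      have hnorm : ‖uC y t - uC y s‖ = ‖aa y‖ * ‖uC y (2*t) - uC y (2*s)‖ := by
        rw [funEq0 hy1 ht hthalf, funEq0 hy1 hs (le_trans hst hthalf), norm_F0_sub]
      have hIH := ih (2*s) (2*t) hs2 ht2 (by linarith) (by
        calc (1/2:ℝ)^n = 2 * (1/2)^(n+1) := by ring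
          _ ≤ 2 * (t - s) := by linarith
          _ = 2*t - 2*s := by ring)
      rw [hnorm]
      calc ((1/2 - 2*y^2) * (1/2)) * (t-s)^α
          = ‖aa y‖ * (((1/2 - 2*y^2) * (1/2)) * (2*t - 2*s)^α) := by
            rw [show (2*t - 2*s) = 2*(t-s) by ring,
              show ‖aa y‖ * (((1/2 - 2*y^2) * (1/2)) * (2*(t-s))^α)
                = ((1/2 - 2*y^2) * (1/2)) * (‖aa y‖ * (2*(t-s))^α) by ring,
              key hρ (by linarith : (0:ℝ) ≤ t - s)]
        _ ≤ ‖aa y‖ * ‖uC y (2*t) - uC y (2*s)‖ := mul_le_mul_of_nonneg_left hIH haa.le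
    · by_cases hshalf : 1/2 ≤ s
      · -- both in the right half
        push_neg at hthalf
        have hs2 : 2*s - 1 ∈ Icc (0:ℝ) 1 := ⟨by nlinarith, by nlinarith [hs.2]⟩
        have ht2 : 2*t - 1 ∈ Icc (0:ℝ) 1 := ⟨by nlinarith, by nlinarith [ht.2]⟩
        have hnorm : ‖uC y t - uC y s‖ = ‖aa y‖ * ‖uC y (2*t-1) - uC y (2*s-1)‖ := by
          rw [funEq1 hy1 ht hthalf.le, funEq1 hy1 hs hshalf, norm_F1_sub]
        have hIH := ih (2*s-1) (2*t-1) hs2 ht2 (by linarith) (by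
          calc (1/2:ℝ)^n = 2 * (1/2)^(n+1) := by ring
            _ ≤ 2 * (t - s) := by linarith
            _ = (2*t-1) - (2*s-1) := by ring)
        rw [hnorm]
        calc ((1/2 - 2*y^2) * (1/2)) * (t-s)^α
            = ‖aa y‖ * (((1/2 - 2*y^2) * (1/2)) * ((2*t-1) - (2*s-1))^α) := by
              rw [show ((2*t-1) - (2*s-1)) = 2*(t-s) by ring,
                show ‖aa y‖ * (((1/2 - 2*y^2) * (1/2)) * (2*(t-s))^α)
                  = ((1/2 - 2*y^2) * (1/2)) * (‖aa y‖ * (2*(t-s))^α) by ring,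
                key hρ (by linarith : (0:ℝ) ≤ t - s)]
          _ ≤ ‖aa y‖ * ‖uC y (2*t-1) - uC y (2*s-1)‖ := mul_le_mul_of_nonneg_left hIH haa.le
      · -- the crossing case : s ≤ 1/2 ≤ t
        push_neg at hthalf hshalf
        have hs' : s ≤ 1/2 := hshalf.le
        have ht' : 1/2 ≤ t := hthalf.le
        have hs2 : 2*s ∈ Icc (0:ℝ) 1 := ⟨by nlinarith [hs.1], by nlinarith⟩
        have ht2 : 2*t - 1 ∈ Icc (0:ℝ) 1 := ⟨by nlinarith, by nlinarith [ht.2]⟩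
        have hrecs : uC y s = F0 y (uC y (2*s)) := funEq0 hy1 hs hs'
        have hrect : uC y t = F1 y (uC y (2*t-1)) := funEq1 hy1 ht ht'
        set σ := (1/2 - 2*y^2) with hσ
        have hσ0 : 0 < σ := by rw [hσ]; nlinarith
        -- cone estimates
        have hc0 : σ * ‖uC y s - aa y‖ ≤ 1/2 - (uC y s).re := by
          rw [hrecs]; exact cone0 hy0 hy1 (uC_mem hy0 hy1 hs2)
        have hc1 : σ * ‖uC y t - aa y‖ ≤ (uC y t).re - 1/2 := by
          rw [hrect]; exact cone1 hy0 hy1 (uC_mem hy0 hy1 ht2)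
        -- endpoint estimates
        have h3 : (1/2) * (1/2 - s)^α ≤ ‖uC y s - aa y‖ := by
          have : ‖uC y s - aa y‖ = ‖aa y‖ * ‖uC y (2*s) - 1‖ := by
            conv_lhs => rw [hrecs, ← F0_one y]
            rw [norm_F0_sub]
          rw [this]
          have hE := E1' hy0 hy1 hα0 hα1 hρ hs2
          calc (1/2) * (1/2 - s)^α = ‖aa y‖ * ((1/2) * (1 - 2*s)^α) := by
                rw [show (1 - 2*s) = 2*(1/2 - s) by ring,
                  show ‖aa y‖ * ((1/2) * (2*(1/2-s))^α) = (1/2) * (‖aa y‖ * (2*(1/2-s))^α) by ring,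
                  key hρ (by linarith : (0:ℝ) ≤ 1/2 - s)]
            _ ≤ ‖aa y‖ * ‖uC y (2*s) - 1‖ := by
                apply mul_le_mul_of_nonneg_left _ haa.le
                simpa using hE
        have h4 : (1/2) * (t - 1/2)^α ≤ ‖uC y t - aa y‖ := by
          have : ‖uC y t - aa y‖ = ‖aa y‖ * ‖uC y (2*t-1)‖ := by
            conv_lhs => rw [hrect, ← F1_zero y]
            rw [norm_F1_sub, sub_zero]
          rw [this]
          have hE := E0' hy0 hy1 hα0 hα1 hρ ht2
          calc (1/2) * (t - 1/2)^α = ‖aa y‖ * ((1/2) * (2*t - 1)^α) := by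
                rw [show (2*t - 1) = 2*(t - 1/2) by ring,
                  show ‖aa y‖ * ((1/2) * (2*(t-1/2))^α) = (1/2) * (‖aa y‖ * (2*(t-1/2))^α) by ring,
                  key hρ (by linarith : (0:ℝ) ≤ t - 1/2)]
            _ ≤ ‖aa y‖ * ‖uC y (2*t-1)‖ := mul_le_mul_of_nonneg_left hE haa.le
        -- subadditivity
        have hsub : (t - s)^α ≤ (t - 1/2)^α + (1/2 - s)^α := by
          have := rpow_subadd (show (0:ℝ) ≤ t - 1/2 by linarith)
            (show (0:ℝ) ≤ 1/2 - s by linarith) hα0.le hα1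
          calc (t-s)^α = ((t - 1/2) + (1/2 - s))^α := by
                rw [show t - s = (t - 1/2) + (1/2 - s) by ring]
            _ ≤ _ := this
        -- put it together
        have hre : (uC y t - uC y s).re ≤ ‖uC y t - uC y s‖ := re_le_norm _
        have hre2 : (uC y t - uC y s).re = (uC y t).re - (uC y s).re := by
          simp [Complex.sub_re]
        have m1 := mul_le_mul_of_nonneg_left h4 hσ0.le
        have m2 := mul_le_mul_of_nonneg_left h3 hσ0.le
        have m3 := mul_le_mul_of_nonneg_left hsub hσ0.le
        linarith [m1, m2, m3, hc0, hc1, hre, hre2]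


lemma diam_T {y : ℝ} (hy0 : 0 < y) (hy1 : y^2 < 1/4) {z w : ℂ}
    (hz : InT y z) (hw : InT y w) : ‖z - w‖ ≤ 2 := by
  have hz' := (InT_def y z).mp hz
  have hw' := (InT_def y w).mp hw
  have hz0 := hz.re_nonneg hy0
  have hz1 := hz.re_le_one hy0
  have hw0 := hw.re_nonneg hy0
  have hw1 := hw.re_le_one hy0
  have hzim : z.im ≤ 1 := by nlinarith [hz'.2.1]
  have hwim : w.im ≤ 1 := by nlinarith [hw'.2.1]
  refine le_trans (Complex.norm_le_abs_re_add_abs_im _) ?_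
  simp only [Complex.sub_re, Complex.sub_im]
  have h1 : |z.re - w.re| ≤ 1 := abs_le.mpr ⟨by linarith, by linarith⟩
  have h2 : |z.im - w.im| ≤ 1 := abs_le.mpr ⟨by linarith [hz'.1, hw'.1], by linarith [hz'.1, hw'.1]⟩
  linarith

/-- Points in the same dyadic interval of generation `n` have images within `2‖a‖ⁿ`. -/
lemma D {y : ℝ} (hy0 : 0 < y) (hy1 : y^2 < 1/4) :
    ∀ n : ℕ, ∀ k : ℤ, ∀ s t : ℝ, s ∈ Icc (0:ℝ) 1 → t ∈ Icc (0:ℝ) 1 →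
      s ∈ Icc ((k:ℝ)/2^n) (((k:ℝ)+1)/2^n) → t ∈ Icc ((k:ℝ)/2^n) (((k:ℝ)+1)/2^n) →
      ‖uC y s - uC y t‖ ≤ 2 * ‖aa y‖ ^ n := by
  intro n
  induction n with
  | zero =>
    intro k s t hs ht _ _
    rw [pow_zero, mul_one]
    exact diam_T hy0 hy1 (uC_mem hy0 hy1 hs) (uC_mem hy0 hy1 ht)
  | succ n ih =>
    intro k s t hs ht hsk htk
    have h2pow : (0:ℝ) < 2^n := by positivity
    have h2pow' : (0:ℝ) < 2^(n+1) := by positivity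
    have hps : (2:ℝ)^(n+1) = 2 * 2^n := by ring
    have haa0 := norm_nonneg (aa y)
    -- rewrite interval conditions multiplicatively
    have hs1 : (k:ℝ) ≤ s * 2^(n+1) := (div_le_iff₀ h2pow').mp hsk.1
    have hs2 : s * 2^(n+1) ≤ (k:ℝ)+1 := (le_div_iff₀ h2pow').mp hsk.2
    have ht1 : (k:ℝ) ≤ t * 2^(n+1) := (div_le_iff₀ h2pow').mp htk.1
    have ht2 : t * 2^(n+1) ≤ (k:ℝ)+1 := (le_div_iff₀ h2pow').mp htk.2
    by_cases hk : k + 1 ≤ 2^n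
    · -- left half
      have hkr : ((k:ℝ) + 1) ≤ 2^n := by exact_mod_cast hk
      have hs_half : s ≤ 1/2 := by nlinarith
      have ht_half : t ≤ 1/2 := by nlinarith
      have hmem2s : 2*s ∈ Icc (0:ℝ) 1 := ⟨by linarith [hs.1], by linarith⟩
      have hmem2t : 2*t ∈ Icc (0:ℝ) 1 := ⟨by linarith [ht.1], by linarith⟩
      have hins : 2*s ∈ Icc ((k:ℝ)/2^n) (((k:ℝ)+1)/2^n) :=
        ⟨(div_le_iff₀ h2pow).mpr (by nlinarith), (le_div_iff₀ h2pow).mpr (by nlinarith)⟩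
      have hint : 2*t ∈ Icc ((k:ℝ)/2^n) (((k:ℝ)+1)/2^n) :=
        ⟨(div_le_iff₀ h2pow).mpr (by nlinarith), (le_div_iff₀ h2pow).mpr (by nlinarith)⟩
      have hnorm : ‖uC y s - uC y t‖ = ‖aa y‖ * ‖uC y (2*s) - uC y (2*t)‖ := by
        rw [funEq0 hy1 hs hs_half, funEq0 hy1 ht ht_half, norm_F0_sub]
      rw [hnorm]
      calc ‖aa y‖ * ‖uC y (2*s) - uC y (2*t)‖ ≤ ‖aa y‖ * (2 * ‖aa y‖^n) :=
            mul_le_mul_of_nonneg_left (ih k (2*s) (2*t) hmem2s hmem2t hins hint) haa0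
        _ = 2 * ‖aa y‖ ^ (n+1) := by ring
    · -- right half
      push_neg at hk
      have hk2 : (2^n : ℤ) ≤ k := by linarith [Int.lt_iff_add_one_le.mp hk]
      have hkr : ((2:ℝ)^n) ≤ (k:ℝ) := by exact_mod_cast hk2
      have hs_half : 1/2 ≤ s := by nlinarith
      have ht_half : 1/2 ≤ t := by nlinarith
      have hmem2s : 2*s - 1 ∈ Icc (0:ℝ) 1 := ⟨by linarith, by linarith [hs.2]⟩
      have hmem2t : 2*t - 1 ∈ Icc (0:ℝ) 1 := ⟨by linarith, by linarith [ht.2]⟩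
      have hcast : ((k - 2^n : ℤ) : ℝ) = (k:ℝ) - 2^n := by push_cast; ring
      have hins : 2*s - 1 ∈ Icc (((k - 2^n : ℤ):ℝ)/2^n) ((((k - 2^n : ℤ):ℝ)+1)/2^n) := by
        rw [hcast]
        exact ⟨(div_le_iff₀ h2pow).mpr (by nlinarith), (le_div_iff₀ h2pow).mpr (by nlinarith)⟩
      have hint : 2*t - 1 ∈ Icc (((k - 2^n : ℤ):ℝ)/2^n) ((((k - 2^n : ℤ):ℝ)+1)/2^n) := by
        rw [hcast]
        exact ⟨(div_le_iff₀ h2pow).mpr (by nlinarith), (le_div_iff₀ h2pow).mpr (by nlinarith)⟩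
      have hnorm : ‖uC y s - uC y t‖ = ‖aa y‖ * ‖uC y (2*s-1) - uC y (2*t-1)‖ := by
        rw [funEq1 hy1 hs hs_half, funEq1 hy1 ht ht_half, norm_F1_sub]
      rw [hnorm]
      calc ‖aa y‖ * ‖uC y (2*s-1) - uC y (2*t-1)‖ ≤ ‖aa y‖ * (2 * ‖aa y‖^n) :=
            mul_le_mul_of_nonneg_left
              (ih (k - 2^n) (2*s-1) (2*t-1) hmem2s hmem2t hins hint) haa0
        _ = 2 * ‖aa y‖ ^ (n+1) := by ring

lemma pow_aa_eq {y α : ℝ} (hρ : ‖aa y‖ = (2:ℝ)^(-α)) (n : ℕ) :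
    ‖aa y‖ ^ n = ((1/2:ℝ)^n)^α := by
  have h1 : ((1:ℝ)/2)^n = (2:ℝ)^(-(n:ℝ)) := by
    rw [Real.rpow_neg (by norm_num : (0:ℝ) ≤ 2), Real.rpow_natCast, one_div, inv_pow]
  rw [hρ, h1, ← Real.rpow_natCast ((2:ℝ)^(-α)) n,
    ← Real.rpow_mul (by norm_num : (0:ℝ) ≤ 2), ← Real.rpow_mul (by norm_num : (0:ℝ) ≤ 2)]
  ring_nf

lemma Upper {y α : ℝ} (hy0 : 0 < y) (hy1 : y^2 < 1/4) (hα0 : 0 < α) (hα1 : α ≤ 1)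
    (hρ : ‖aa y‖ = (2:ℝ)^(-α)) :
    ∀ s t : ℝ, s ∈ Icc (0:ℝ) 1 → t ∈ Icc (0:ℝ) 1 → s ≤ t →
      ‖uC y s - uC y t‖ ≤ 8 * (t - s)^α := by
  intro s t hs ht hst
  rcases eq_or_lt_of_le hst with heq | hlt
  · rw [heq, sub_self, sub_self, norm_zero, Real.zero_rpow hα0.ne']
    norm_num
  · set d := t - s with hd_def
    have hd : 0 < d := by simp [hd_def]; linarith
    have hd1 : d ≤ 1 := by simp [hd_def]; linarith [hs.1, ht.2]
    have hex : ∃ m : ℕ, (1/2:ℝ)^(m+1) < d := by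
      obtain ⟨m, hm⟩ := exists_pow_lt_of_lt_one hd (show (1/2:ℝ) < 1 by norm_num)
      refine ⟨m, lt_of_le_of_lt ?_ hm⟩
      rw [pow_succ]
      nlinarith [pow_nonneg (show (0:ℝ) ≤ 1/2 by norm_num) m]
    set n := Nat.find hex with hn_def
    have hn : (1/2:ℝ)^(n+1) < d := Nat.find_spec hex
    have hn2 : d ≤ (1/2:ℝ)^n := by
      by_cases h0 : n = 0
      · rw [h0, pow_zero]; exact hd1
      · obtain ⟨m, hm⟩ := Nat.exists_eq_succ_of_ne_zero h0
        have hmlt : m < Nat.find hex := by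
          have h' : m < n := by rw [hm]; exact Nat.lt_succ_self m
          rwa [hn_def] at h'
        have hle := Nat.find_min hex hmlt
        push_neg at hle
        rw [hm]
        exact hle
    have h2pow : (0:ℝ) < 2^n := by positivity
    have hhalfpow : (1/2:ℝ)^n * 2^n = 1 := by
      rw [div_pow, one_pow, div_mul_cancel₀]
      positivity
    -- the `aa` power bound
    have hpow : ‖aa y‖^n ≤ 2 * d^α := by
      rw [pow_aa_eq hρ]
      have e1 : ((1/2:ℝ)^n) = 2 * (1/2)^(n+1) := by rw [pow_succ]; ring
      calc ((1/2:ℝ)^n)^α = (2 * (1/2)^(n+1))^α := by rw [← e1]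
        _ = 2^α * ((1/2:ℝ)^(n+1))^α :=
            Real.mul_rpow (by norm_num) (by positivity)
        _ ≤ 2 * d^α := by
            have h2a : (2:ℝ)^α ≤ 2 := by
              calc (2:ℝ)^α ≤ (2:ℝ)^(1:ℝ) :=
                    Real.rpow_le_rpow_of_exponent_le one_le_two hα1
                _ = 2 := Real.rpow_one 2
            have hda : ((1/2:ℝ)^(n+1))^α ≤ d^α :=
              Real.rpow_le_rpow (by positivity) hn.le hα0.le
            have hpos : (0:ℝ) ≤ ((1/2:ℝ)^(n+1))^α := by positivity
            nlinarith [Real.rpow_nonneg hd.le α, Real.rpow_nonneg (show (0:ℝ) ≤ 2 by norm_num) α]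
    set k : ℤ := ⌊s * 2^n⌋ with hk_def
    have hk1 : (k:ℝ) ≤ s*2^n := Int.floor_le _
    have hk2 : s*2^n < (k:ℝ)+1 := Int.lt_floor_add_one _
    have hs_mem : s ∈ Icc ((k:ℝ)/2^n) (((k:ℝ)+1)/2^n) :=
      ⟨(div_le_iff₀ h2pow).mpr hk1, (le_div_iff₀ h2pow).mpr hk2.le⟩
    by_cases hcase : t ≤ ((k:ℝ)+1)/2^n
    · have ht_mem : t ∈ Icc ((k:ℝ)/2^n) (((k:ℝ)+1)/2^n) :=
        ⟨le_trans hs_mem.1 hst, hcase⟩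
      have := D hy0 hy1 n k s t hs ht hs_mem ht_mem
      calc ‖uC y s - uC y t‖ ≤ 2 * ‖aa y‖^n := this
        _ ≤ 8 * d^α := by nlinarith [Real.rpow_nonneg hd.le α]
    · push_neg at hcase
      set m : ℝ := ((k:ℝ)+1)/2^n with hm_def
      have hm0 : 0 ≤ m := le_trans hs.1 hs_mem.2
      have hm1 : m ≤ 1 := le_trans hcase.le ht.2
      have hm_memIcc : m ∈ Icc (0:ℝ) 1 := ⟨hm0, hm1⟩
      have hm_in_k : m ∈ Icc ((k:ℝ)/2^n) (((k:ℝ)+1)/2^n) := by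
        refine ⟨?_, le_refl _⟩
        rw [hm_def]
        gcongr
        linarith
      have hcast : (((k+1:ℤ)):ℝ) = (k:ℝ)+1 := by push_cast; ring
      have ht_up : t ≤ ((k:ℝ)+1+1)/2^n := by
        rw [le_div_iff₀ h2pow]
        have hts : t ≤ s + (1/2:ℝ)^n := by
          have : t - s ≤ (1/2:ℝ)^n := by rw [← hd_def]; exact hn2
          linarith
        nlinarith [mul_le_mul_of_nonneg_right hts h2pow.le]
      have hm_in_k1 : m ∈ Icc (((k+1:ℤ):ℝ)/2^n) ((((k+1:ℤ):ℝ)+1)/2^n) := by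
        rw [hcast]
        refine ⟨le_refl _, ?_⟩
        rw [hm_def]
        gcongr
        linarith
      have ht_in_k1 : t ∈ Icc (((k+1:ℤ):ℝ)/2^n) ((((k+1:ℤ):ℝ)+1)/2^n) := by
        rw [hcast]
        exact ⟨hcase.le, ht_up⟩
      have hD1 := D hy0 hy1 n k s m hs hm_memIcc hs_mem hm_in_k
      have hD2 := D hy0 hy1 n (k+1) m t hm_memIcc ht hm_in_k1 ht_in_k1
      calc ‖uC y s - uC y t‖ ≤ ‖uC y s - uC y m‖ + ‖uC y m - uC y t‖ :=
            norm_sub_le_norm_sub_add_norm_sub _ _ _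
        _ ≤ 2 * ‖aa y‖^n + 2 * ‖aa y‖^n := add_le_add hD1 hD2
        _ ≤ 8 * d^α := by linarith


end BiHolderAux

open BiHolderAux in
/-- Lemma 7 of the paper: for `1/2 < α < 1` there is a curve `u : [0,1] → ℝ²` that is
bi-Hölder of exponent `α`: `c₁|s-t|^α ≤ |u(s)-u(t)| ≤ c₂|s-t|^α`. -/
theorem exists_biHolder_curve (α : ℝ) (hα₁ : 1 / 2 < α) (hα₂ : α < 1) :
    ∃ (c₁ c₂ : ℝ) (u : ℝ → EuclideanSpace ℝ (Fin 2)), 0 < c₁ ∧ 0 < c₂ ∧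
      ∀ s ∈ Set.Icc (0 : ℝ) 1, ∀ t ∈ Set.Icc (0 : ℝ) 1,
        c₁ * |s - t| ^ α ≤ ‖u s - u t‖ ∧ ‖u s - u t‖ ≤ c₂ * |s - t| ^ α := by
  have hα0 : 0 < α := by linarith
  have hα1 : α ≤ 1 := hα₂.le
  set r : ℝ := (2:ℝ)^(-α) with hr_def
  have hr0 : 0 ≤ r := Real.rpow_nonneg (by norm_num) _
  have hr2 : r^2 = (2:ℝ)^(-(2*α)) := by
    rw [hr_def, ← Real.rpow_natCast ((2:ℝ)^(-α)) 2,
      ← Real.rpow_mul (by norm_num : (0:ℝ) ≤ 2)]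
    congr 1
    push_cast
    ring
  have h14 : (2:ℝ)^(-(2:ℝ)) = 1/4 := by
    rw [Real.rpow_neg (by norm_num : (0:ℝ) ≤ 2), show ((2:ℝ))^((2:ℝ)) = 4 by
      rw [show ((2:ℝ)) = ((2:ℕ):ℝ) from by norm_num, Real.rpow_natCast]; norm_num]
    norm_num
  have h12 : (2:ℝ)^(-(1:ℝ)) = 1/2 := by
    rw [Real.rpow_neg (by norm_num : (0:ℝ) ≤ 2), Real.rpow_one]
    norm_num
  have hlow : 1/4 < r^2 := by
    rw [hr2, ← h14]
    exact Real.rpow_lt_rpow_left_iff (by norm_num : (1:ℝ) < 2) |>.mpr (by linarith)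
  have hhigh : r^2 < 1/2 := by
    rw [hr2, ← h12]
    exact Real.rpow_lt_rpow_left_iff (by norm_num : (1:ℝ) < 2) |>.mpr (by linarith)
  set y : ℝ := Real.sqrt (r^2 - 1/4) with hy_def
  have hy0 : 0 < y := Real.sqrt_pos.mpr (by linarith)
  have hysq : y^2 = r^2 - 1/4 := Real.sq_sqrt (by linarith)
  have hy1 : y^2 < 1/4 := by rw [hysq]; linarith
  have hρ : ‖aa y‖ = r := by
    have h1 : ‖aa y‖^2 = r^2 := by rw [norm_aa_sq y, hysq]; ring
    calc ‖aa y‖ = Real.sqrt (‖aa y‖^2) := (Real.sqrt_sq (norm_nonneg _)).symm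
      _ = Real.sqrt (r^2) := by rw [h1]
      _ = r := Real.sqrt_sq hr0
  set c₁ : ℝ := (1/2 - 2*y^2) * (1/2) with hc1_def
  have hc1 : 0 < c₁ := by rw [hc1_def]; nlinarith
  refine ⟨c₁, 8, fun t => Complex.orthonormalBasisOneI.repr (uC y t), hc1, by norm_num, ?_⟩
  intro s hs t ht
  have hnorm_eq : ∀ a b : ℝ, ‖(Complex.orthonormalBasisOneI.repr (uC y a) :
      EuclideanSpace ℝ (Fin 2)) - Complex.orthonormalBasisOneI.repr (uC y b)‖
      = ‖uC y a - uC y b‖ := by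
    intro a b
    rw [← map_sub, LinearIsometryEquiv.norm_map]
  rw [hnorm_eq s t]
  rcases le_total s t with hst | hst
  · constructor
    · rcases eq_or_lt_of_le hst with heq | hlt
      · rw [heq]
        simp [Real.zero_rpow hα0.ne']
      · have habs : |s - t| = t - s := by rw [abs_sub_comm, _root_.abs_of_pos (by linarith)]
        obtain ⟨n, hn⟩ := exists_pow_lt_of_lt_one (show (0:ℝ) < t - s by linarith)
          (show (1/2:ℝ) < 1 by norm_num)
        have := G hy0 hy1 hα0 hα1 hρ n s t hs ht hst hn.le
        rw [habs, norm_sub_rev]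
        exact this
    · have habs : |s - t| = t - s := by rw [abs_sub_comm, _root_.abs_of_nonneg (by linarith)]
      rw [habs]
      exact Upper hy0 hy1 hα0 hα1 hρ s t hs ht hst
  · constructor
    · rcases eq_or_lt_of_le hst with heq | hlt
      · rw [heq]
        simp [Real.zero_rpow hα0.ne']
      · have habs : |s - t| = s - t := _root_.abs_of_pos (by linarith)
        obtain ⟨n, hn⟩ := exists_pow_lt_of_lt_one (show (0:ℝ) < s - t by linarith)
          (show (1/2:ℝ) < 1 by norm_num)
        have := G hy0 hy1 hα0 hα1 hρ n t s ht hs hst hn.le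
        rw [habs]
        exact this
    · have habs : |s - t| = s - t := _root_.abs_of_nonneg (by linarith)
      rw [habs, norm_sub_rev]
      exact Upper hy0 hy1 hα0 hα1 hρ t s ht hs hst
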